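/- The supremum of the expected welfare over all persuasive straightforward signaling schemes equals μ(1) times the supremum of Σ_{k=1}^N Σ_{i=1}^N p_{ik}·(F(k) − r(i)) over all families p = (p_{ik})_{i,k∈{1,…,N}} of nonnegative reals satisfying: (M_i) Σ_{k=1}^N p_{ik}·(F(k) − r(i)) ≥ 0 for every i; (S_i) Σ_{k=1}^{N−1} ((1/k)·Σ_{j=1}^N p_{jk} − p_{ik})·(F(k+1) − r(i)) + (1 − Σ_{k=1}^N (1/k)·Σ_{j=1}^N p_{jk})·(F(1) − r(i)) ≤ (μ(0)/μ(1))·r(i) for every i; (C) Σ_{k=1}^N (1/k)·Σ_{i=1}^N p_{ik} ≤ 1; and (V) k·p_{ik} ≤ Σ_{j=1}^N p_{jk} for every i,k. -/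

import Mathlib

open Finset

noncomputable section

/-- Welfare `W(θ, S) = θ·|S|·F(|S|) − Σ_{i∈S} r(i)`. -/
def W (F r : ℕ → ℝ) (θ : ℕ) (S : Finset ℕ) : ℝ :=
  (θ : ℝ) * S.card * F S.card - ∑ i ∈ S, r i

/-- A straightforward signaling scheme: for each θ ∈ {0,1}, `φ θ` is a probability
distribution over the subsets of the agent set `{1,…,N}`. -/
def IsScheme (N : ℕ) (φ : ℕ → Finset ℕ → ℝ) : Prop :=
  (∀ θ ∈ ({0, 1} : Finset ℕ), ∀ S ∈ (Icc 1 N).powerset, 0 ≤ φ θ S) ∧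
  (∀ θ ∈ ({0, 1} : Finset ℕ), ∑ S ∈ (Icc 1 N).powerset, φ θ S = 1)

/-- Expected welfare with prior μ(1) = μ1, μ(0) = 1 − μ1. -/
def EW (N : ℕ) (F r : ℕ → ℝ) (μ1 : ℝ) (φ : ℕ → Finset ℕ → ℝ) : ℝ :=
  (1 - μ1) * ∑ S ∈ (Icc 1 N).powerset, φ 0 S * W F r 0 S +
  μ1 * ∑ S ∈ (Icc 1 N).powerset, φ 1 S * W F r 1 S

/-- Persuasiveness: the move constraint and the stay constraint for every agent. -/
def Persuasive (N : ℕ) (F r : ℕ → ℝ) (μ1 : ℝ) (φ : ℕ → Finset ℕ → ℝ) : Prop :=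
  ∀ i ∈ Icc 1 N,
    (0 ≤ (1 - μ1) * ∑ S ∈ (Icc 1 N).powerset.filter (fun S => i ∈ S),
            φ 0 S * ((0 : ℝ) * F S.card - r i) +
          μ1 * ∑ S ∈ (Icc 1 N).powerset.filter (fun S => i ∈ S),
            φ 1 S * ((1 : ℝ) * F S.card - r i)) ∧
    ((1 - μ1) * ∑ S ∈ (Icc 1 N).powerset.filter (fun S => i ∉ S),
        φ 0 S * ((0 : ℝ) * F (S.card + 1) - r i) +
      μ1 * ∑ S ∈ (Icc 1 N).powerset.filter (fun S => i ∉ S),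
        φ 1 S * ((1 : ℝ) * F (S.card + 1) - r i) ≤ 0)

/-- `p_{ik}`: probability, conditional on θ = 1, that `k` agents are recommended to
move and agent `i` is among them. -/
def pOf (N : ℕ) (φ : ℕ → Finset ℕ → ℝ) (i k : ℕ) : ℝ :=
  ∑ S ∈ (Icc 1 N).powerset.filter (fun S => i ∈ S ∧ S.card = k), φ 1 S


lemma mono_chain {f : ℕ → ℝ} {N : ℕ} (h : ∀ i, i + 1 ≤ N → f i ≤ f (i + 1)) :
    ∀ i j, i ≤ j → j ≤ N → f i ≤ f j := by
  intro i j hij hjN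
  induction j with
  | zero => rw [Nat.le_zero.mp hij]
  | succ n ihn =>
    rcases Nat.lt_or_ge i (n + 1) with h' | h'
    · exact le_trans (ihn (Nat.lt_succ_iff.mp h') (le_trans (Nat.le_succ n) hjN)) (h n hjN)
    · rw [le_antisymm hij h']

lemma swap_sum (N : ℕ) (w : Finset ℕ → ℝ) (g : ℕ → Finset ℕ → ℝ) :
    ∑ S ∈ (Icc 1 N).powerset, w S * ∑ i ∈ S, g i S
      = ∑ i ∈ Icc 1 N, ∑ S ∈ (Icc 1 N).powerset.filter (fun S => i ∈ S), w S * g i S := by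
  have h1 : ∀ S ∈ (Icc 1 N).powerset, w S * ∑ i ∈ S, g i S
      = ∑ i ∈ Icc 1 N, if i ∈ S then w S * g i S else 0 := by
    intro S hS
    rw [Finset.mul_sum, Finset.sum_ite_mem,
      Finset.inter_eq_right.mpr (Finset.mem_powerset.mp hS)]
  rw [Finset.sum_congr rfl h1, Finset.sum_comm]
  exact Finset.sum_congr rfl (fun i _ => (Finset.sum_filter _ _).symm)

lemma filter_comm_mem (N k : ℕ) (i : ℕ) :
    (Icc 1 N).powerset.filter (fun S => i ∈ S ∧ S.card = k)
      = ((Icc 1 N).powerset.filter (fun S => S.card = k)).filter (fun S => i ∈ S) := by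
  rw [Finset.filter_filter]
  apply Finset.filter_congr
  intro S _
  simp [and_comm]

lemma filter_comm_not_mem (N k : ℕ) (i : ℕ) :
    (Icc 1 N).powerset.filter (fun S => i ∉ S ∧ S.card = k)
      = ((Icc 1 N).powerset.filter (fun S => S.card = k)).filter (fun S => i ∉ S) := by
  rw [Finset.filter_filter]
  apply Finset.filter_congr
  intro S _
  simp [and_comm]

lemma card_mem_Icc (N : ℕ) {S : Finset ℕ} {i : ℕ} (hS : S ∈ (Icc 1 N).powerset)
    (hi : i ∈ S) : S.card ∈ Icc 1 N := by
  rw [Finset.mem_Icc]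
  constructor
  · exact Finset.card_pos.mpr ⟨i, hi⟩
  · have := Finset.card_le_card (Finset.mem_powerset.mp hS)
    rwa [Nat.card_Icc, Nat.add_sub_cancel] at this

lemma card_not_mem_Icc (N : ℕ) {S : Finset ℕ} {i : ℕ} (hS : S ∈ (Icc 1 N).powerset)
    (hiA : i ∈ Icc 1 N) (hi : i ∉ S) : S.card ∈ Icc 0 (N - 1) := by
  rw [Finset.mem_Icc]
  refine ⟨Nat.zero_le _, ?_⟩
  have hsub := Finset.mem_powerset.mp hS
  have hle : S.card ≤ N := by
    have := Finset.card_le_card hsub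
    rwa [Nat.card_Icc, Nat.add_sub_cancel] at this
  rcases Nat.lt_or_ge S.card N with h | h
  · omega
  · exfalso
    have hcards : (Icc 1 N).card ≤ S.card := by
      rw [Nat.card_Icc, Nat.add_sub_cancel]; omega
    have := Finset.eq_of_subset_of_card_le hsub hcards
    rw [this] at hi
    exact hi hiA

lemma fiber_move (N : ℕ) (w : Finset ℕ → ℝ) (i : ℕ) (c : ℕ → ℝ) :
    ∑ S ∈ (Icc 1 N).powerset.filter (fun S => i ∈ S), w S * c S.card
      = ∑ k ∈ Icc 1 N,
          (∑ S ∈ (Icc 1 N).powerset.filter (fun S => i ∈ S ∧ S.card = k), w S) * c k := by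
  rw [← Finset.sum_fiberwise_of_maps_to (g := fun S => S.card) (t := Icc 1 N)
    (fun S hS => card_mem_Icc N (Finset.mem_filter.mp hS).1 (Finset.mem_filter.mp hS).2)
    (fun S => w S * c S.card)]
  apply Finset.sum_congr rfl
  intro k _
  rw [Finset.filter_filter, Finset.sum_mul]
  apply Finset.sum_congr
  · apply Finset.filter_congr; intro S _; simp [and_comm, eq_comm]
  · intro S hS
    rw [(Finset.mem_filter.mp hS).2.2]

lemma fiber_stay (N : ℕ) (w : Finset ℕ → ℝ) (i : ℕ) (hiA : i ∈ Icc 1 N) (c : ℕ → ℝ) :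
    ∑ S ∈ (Icc 1 N).powerset.filter (fun S => i ∉ S), w S * c (S.card + 1)
      = ∑ k ∈ Icc 0 (N - 1),
          (∑ S ∈ (Icc 1 N).powerset.filter (fun S => i ∉ S ∧ S.card = k), w S) * c (k + 1) := by
  rw [← Finset.sum_fiberwise_of_maps_to (g := fun S => S.card) (t := Icc 0 (N - 1))
    (fun S hS => card_not_mem_Icc N (Finset.mem_filter.mp hS).1 hiA (Finset.mem_filter.mp hS).2)
    (fun S => w S * c (S.card + 1))]
  apply Finset.sum_congr rfl
  intro k _
  rw [Finset.filter_filter, Finset.sum_mul]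
  apply Finset.sum_congr
  · apply Finset.filter_congr; intro S _; simp [and_comm, eq_comm]
  · intro S hS
    rw [(Finset.mem_filter.mp hS).2.2]

lemma filter_card_zero (N : ℕ) :
    (Icc 1 N).powerset.filter (fun S => S.card = 0) = {∅} := by
  ext S
  simp only [Finset.mem_filter, Finset.mem_powerset, Finset.mem_singleton, Finset.card_eq_zero]
  constructor
  · rintro ⟨-, h⟩; exact h
  · rintro rfl; exact ⟨Finset.empty_subset _, rfl⟩

lemma total_split (N : ℕ) (f : Finset ℕ → ℝ) :
    ∑ S ∈ (Icc 1 N).powerset, f S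
      = f ∅ + ∑ k ∈ Icc 1 N, ∑ S ∈ (Icc 1 N).powerset.filter (fun S => S.card = k), f S := by
  rw [← Finset.sum_fiberwise_of_maps_to (g := fun S => S.card) (t := Icc 0 N)
    (fun S hS => by
      rw [Finset.mem_Icc]
      have := Finset.card_le_card (Finset.mem_powerset.mp hS)
      rw [Nat.card_Icc, Nat.add_sub_cancel] at this
      exact ⟨Nat.zero_le _, this⟩) f]
  have h01 : Icc 0 N = insert 0 (Icc 1 N) := by
    ext x; simp [Finset.mem_Icc, Finset.mem_insert]; omega
  rw [h01, Finset.sum_insert (by simp)]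
  congr 1
  have : (Icc 1 N).powerset.filter (fun S => S.card = 0) = {∅} := filter_card_zero N
  rw [this, Finset.sum_singleton]

lemma split_zero (N : ℕ) (g : ℕ → ℝ) :
    ∑ k ∈ Icc 0 (N - 1), g k = g 0 + ∑ k ∈ Icc 1 (N - 1), g k := by
  have h01 : Icc 0 (N - 1) = insert 0 (Icc 1 (N - 1)) := by
    ext x; simp [Finset.mem_Icc, Finset.mem_insert]; omega
  rw [h01, Finset.sum_insert (by simp)]

lemma filter_stay_zero (N : ℕ) (i : ℕ) :
    (Icc 1 N).powerset.filter (fun S => i ∉ S ∧ S.card = 0) = {∅} := by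
  ext S
  simp only [Finset.mem_filter, Finset.mem_powerset, Finset.mem_singleton, Finset.card_eq_zero]
  constructor
  · rintro ⟨-, -, h⟩; exact h
  · rintro rfl; exact ⟨Finset.empty_subset _, Finset.notMem_empty i, rfl⟩

-- card of fractional set ≠ 1
lemma frac_ne_one (N k : ℕ) (hk : 1 ≤ k) (q : ℝ) (p : ℕ → ℝ)
    (h0 : ∀ i ∈ Icc 1 N, 0 ≤ p i) (h1 : ∀ i ∈ Icc 1 N, p i ≤ q)
    (hsum : (∑ i ∈ Icc 1 N, p i) = k * q) :
    ((Icc 1 N).filter (fun i => 0 < p i ∧ p i < q)).card ≠ 1 := by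
  intro hcard
  obtain ⟨i₀, hi₀⟩ := Finset.card_eq_one.mp hcard
  have hi₀mem : i₀ ∈ (Icc 1 N).filter (fun i => 0 < p i ∧ p i < q) := by
    rw [hi₀]; exact Finset.mem_singleton_self i₀
  rw [Finset.mem_filter] at hi₀mem
  obtain ⟨hi₀A, hp0, hpq⟩ := hi₀mem
  have hq : 0 < q := lt_trans hp0 hpq
  set T := (Icc 1 N).filter (fun i => p i = q) with hT
  have hi₀T : i₀ ∉ T := by
    simp only [hT, Finset.mem_filter]
    rintro ⟨-, h⟩; exact absurd h (ne_of_lt hpq)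
  have hTsub : T ⊆ Icc 1 N := Finset.filter_subset _ _
  have hsplit : (∑ i ∈ Icc 1 N, p i) = ∑ i ∈ T, p i + ∑ i ∈ (Icc 1 N) \ T, p i := by
    rw [add_comm, Finset.sum_sdiff hTsub]
  have hTsum : ∑ i ∈ T, p i = T.card * q := by
    rw [Finset.sum_congr rfl (fun i hi => (Finset.mem_filter.mp hi).2)]
    simp [mul_comm]
    exact Or.inl rfl
  have hrest : ∑ i ∈ (Icc 1 N) \ T, p i = p i₀ := by
    apply Finset.sum_eq_single_of_mem
    · rw [Finset.mem_sdiff]; exact ⟨hi₀A, hi₀T⟩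
    · intro b hb hbne
      rw [Finset.mem_sdiff, hT, Finset.mem_filter] at hb
      obtain ⟨hbA, hbT⟩ := hb
      have hbq : p b ≠ q := fun h => hbT ⟨hbA, h⟩
      by_contra hpb
      have : b ∈ (Icc 1 N).filter (fun i => 0 < p i ∧ p i < q) := by
        rw [Finset.mem_filter]
        exact ⟨hbA, lt_of_le_of_ne (h0 b hbA) (Ne.symm hpb), lt_of_le_of_ne (h1 b hbA) hbq⟩
      rw [hi₀] at this
      exact hbne (Finset.mem_singleton.mp this)
  have key : p i₀ = (k : ℝ) * q - T.card * q := by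
    rw [hsplit, hTsum, hrest] at hsum; linarith
  have h1' : (T.card : ℝ) < k := by
    nlinarith
  have h2' : (k : ℝ) < T.card + 1 := by
    nlinarith
  have : T.card < k := by exact_mod_cast h1'
  have : k < T.card + 1 := by exact_mod_cast h2'
  omega

lemma exists_marginal (N k : ℕ) (hk : 1 ≤ k) (hkN : k ≤ N) :
    ∀ (m : ℕ) (q : ℝ) (p : ℕ → ℝ), 0 ≤ q →
    (∀ i ∈ Icc 1 N, 0 ≤ p i) → (∀ i ∈ Icc 1 N, p i ≤ q) →
    (∑ i ∈ Icc 1 N, p i) = k * q →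
    ((Icc 1 N).filter (fun i => 0 < p i ∧ p i < q)).card ≤ m →
    ∃ ψ : Finset ℕ → ℝ, (∀ S, 0 ≤ ψ S) ∧
      (∀ S, ψ S ≠ 0 → S ⊆ Icc 1 N ∧ S.card = k) ∧
      (∑ S ∈ (Icc 1 N).powerset, ψ S = q) ∧
      (∀ i ∈ Icc 1 N, ∑ S ∈ (Icc 1 N).powerset.filter (fun S => i ∈ S), ψ S = p i) := by
  intro m
  induction m with
  | zero =>
    intro q p hq h0 h1 hsum hcard
    have hempty : (Icc 1 N).filter (fun i => 0 < p i ∧ p i < q) = ∅ :=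
      Finset.card_eq_zero.mp (Nat.le_zero.mp hcard)
    have hdich : ∀ i ∈ Icc 1 N, p i = 0 ∨ p i = q := by
      intro i hi
      by_contra h
      push_neg at h
      have : i ∈ (Icc 1 N).filter (fun i => 0 < p i ∧ p i < q) := by
        rw [Finset.mem_filter]
        exact ⟨hi, lt_of_le_of_ne (h0 i hi) (Ne.symm h.1), lt_of_le_of_ne (h1 i hi) h.2⟩
      rw [hempty] at this; exact absurd this (Finset.notMem_empty i)
    rcases eq_or_lt_of_le hq with hq0 | hq0
    · -- q = 0
      refine ⟨fun _ => 0, fun _ => le_refl 0, fun S hS => absurd rfl hS, by simp [← hq0], ?_⟩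
      intro i hi
      have := h1 i hi
      have := h0 i hi
      simp only [Finset.sum_const_zero]
      rcases hdich i hi with h | h
      · exact h.symm
      · rw [h, ← hq0]
    · -- q > 0
      set T := (Icc 1 N).filter (fun i => p i = q) with hT
      have hTsub : T ⊆ Icc 1 N := Finset.filter_subset _ _
      have hTsum : ∑ i ∈ Icc 1 N, p i = T.card * q := by
        rw [← Finset.sum_filter_add_sum_filter_not (Icc 1 N) (fun i => p i = q) p]
        have e1 : ∑ i ∈ (Icc 1 N).filter (fun i => p i = q), p i = T.card * q := by
          rw [Finset.sum_congr rfl (fun i hi => (Finset.mem_filter.mp hi).2)]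
          simp [mul_comm]
          exact Or.inl rfl
        have e2 : ∑ i ∈ (Icc 1 N).filter (fun i => ¬ p i = q), p i = 0 := by
          apply Finset.sum_eq_zero
          intro i hi
          rw [Finset.mem_filter] at hi
          rcases hdich i hi.1 with h | h
          · exact h
          · exact absurd h hi.2
        rw [e1, e2, add_zero]
      have hcardT : T.card = k := by
        have : (T.card : ℝ) * q = k * q := by rw [← hTsum, hsum]
        have := mul_right_cancel₀ (ne_of_gt hq0) this
        exact_mod_cast this
      refine ⟨fun S => if S = T then q else 0, ?_, ?_, ?_, ?_⟩
      · intro S; by_cases h : S = T <;> simp [h, hq]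
      · intro S hS
        by_cases h : S = T
        · subst h; exact ⟨hTsub, hcardT⟩
        · simp [h] at hS
      · rw [Finset.sum_ite_eq' _ T (fun _ => q)]
        simp [Finset.mem_powerset.mpr hTsub]
      · intro i hi
        rw [Finset.sum_ite_eq' _ T (fun _ => q)]
        rcases hdich i hi with h | h
        · have hiT : i ∉ T := by
            simp only [hT, Finset.mem_filter]
            rintro ⟨-, hh⟩
            rw [h] at hh; exact absurd hh.symm (ne_of_gt hq0)
          rw [if_neg, h]
          simp only [Finset.mem_filter, Finset.mem_powerset]
          rintro ⟨-, hh⟩; exact hiT hh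
        · have hiT : i ∈ T := by rw [hT, Finset.mem_filter]; exact ⟨hi, h⟩
          rw [if_pos, h]
          simp only [Finset.mem_filter, Finset.mem_powerset]
          exact ⟨hTsub, hiT⟩
  | succ m ih =>
    intro q p hq h0 h1 hsum hcard
    by_cases hc : ((Icc 1 N).filter (fun i => 0 < p i ∧ p i < q)).card ≤ m
    · exact ih q p hq h0 h1 hsum hc
    push_neg at hc
    set Fr := (Icc 1 N).filter (fun i => 0 < p i ∧ p i < q) with hFr
    have hFc : Fr.card = m + 1 := le_antisymm hcard hc
    have h2le : 2 ≤ Fr.card := by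
      rcases Nat.lt_or_ge Fr.card 2 with h | h
      · interval_cases hcc : Fr.card
        · omega
        · exact absurd hcc (frac_ne_one N k hk q p h0 h1 hsum)
      · exact h
    obtain ⟨a, ha, b, hb, hab⟩ := Finset.one_lt_card.mp h2le
    rw [hFr, Finset.mem_filter] at ha hb
    obtain ⟨haA, hpa0, hpaq⟩ := ha
    obtain ⟨hbA, hpb0, hpbq⟩ := hb
    set ε := min (q - p a) (p b) with hε
    set δ := min (p a) (q - p b) with hδ
    have hε0 : 0 < ε := lt_min (by linarith) hpb0
    have hδ0 : 0 < δ := lt_min hpa0 (by linarith)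
    have hεa : ε ≤ q - p a := min_le_left _ _
    have hεb : ε ≤ p b := min_le_right _ _
    have hδa : δ ≤ p a := min_le_left _ _
    have hδb : δ ≤ q - p b := min_le_right _ _
    set p' := fun i => if i = a then p a + ε else if i = b then p b - ε else p i with hp'
    set p'' := fun i => if i = a then p a - δ else if i = b then p b + δ else p i with hp''
    have hp'a : p' a = p a + ε := by simp [hp']
    have hp'b : p' b = p b - ε := by simp [hp', hab.symm, Ne.symm hab]
    have hp''a : p'' a = p a - δ := by simp [hp'']
    have hp''b : p'' b = p b + δ := by simp [hp'', hab.symm, Ne.symm hab]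
    have hp'o : ∀ i, i ≠ a → i ≠ b → p' i = p i := by intro i h1 h2; simp [hp', h1, h2]
    have hp''o : ∀ i, i ≠ a → i ≠ b → p'' i = p i := by intro i h1 h2; simp [hp'', h1, h2]
    -- sum preservation
    have hsum' : ∀ (f : ℕ → ℝ), f a + f b = p a + p b → (∀ i, i ≠ a → i ≠ b → f i = p i) →
        ∑ i ∈ Icc 1 N, f i = ∑ i ∈ Icc 1 N, p i := by
      intro f hfab hfo
      have hbmem : b ∈ (Icc 1 N).erase a := Finset.mem_erase.mpr ⟨Ne.symm hab, hbA⟩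
      rw [← Finset.add_sum_erase _ f haA, ← Finset.add_sum_erase _ p haA,
          ← Finset.add_sum_erase _ f hbmem, ← Finset.add_sum_erase _ p hbmem]
      have : ∑ i ∈ ((Icc 1 N).erase a).erase b, f i = ∑ i ∈ ((Icc 1 N).erase a).erase b, p i := by
        apply Finset.sum_congr rfl
        intro i hi
        rw [Finset.mem_erase, Finset.mem_erase] at hi
        exact hfo i hi.2.1 hi.1
      rw [this]; ring_nf; linarith [hfab]
    have hsp' : ∑ i ∈ Icc 1 N, p' i = ↑k * q := by
      rw [hsum' p' (by rw [hp'a, hp'b]; ring) hp'o]; exact hsum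
    have hsp'' : ∑ i ∈ Icc 1 N, p'' i = ↑k * q := by
      rw [hsum' p'' (by rw [hp''a, hp''b]; ring) hp''o]; exact hsum
    have h0' : ∀ i ∈ Icc 1 N, 0 ≤ p' i := by
      intro i hi
      rcases eq_or_ne i a with rfl | hia
      · rw [hp'a]; linarith
      rcases eq_or_ne i b with rfl | hib
      · rw [hp'b]; linarith
      · rw [hp'o i hia hib]; exact h0 i hi
    have h1' : ∀ i ∈ Icc 1 N, p' i ≤ q := by
      intro i hi
      rcases eq_or_ne i a with rfl | hia
      · rw [hp'a]; linarith
      rcases eq_or_ne i b with rfl | hib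
      · rw [hp'b]; linarith
      · rw [hp'o i hia hib]; exact h1 i hi
    have h0'' : ∀ i ∈ Icc 1 N, 0 ≤ p'' i := by
      intro i hi
      rcases eq_or_ne i a with rfl | hia
      · rw [hp''a]; linarith
      rcases eq_or_ne i b with rfl | hib
      · rw [hp''b]; linarith
      · rw [hp''o i hia hib]; exact h0 i hi
    have h1'' : ∀ i ∈ Icc 1 N, p'' i ≤ q := by
      intro i hi
      rcases eq_or_ne i a with rfl | hia
      · rw [hp''a]; linarith
      rcases eq_or_ne i b with rfl | hib
      · rw [hp''b]; linarith
      · rw [hp''o i hia hib]; exact h1 i hi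
    have haFr : a ∈ Fr := by rw [hFr, Finset.mem_filter]; exact ⟨haA, hpa0, hpaq⟩
    have hbFr : b ∈ Fr := by rw [hFr, Finset.mem_filter]; exact ⟨hbA, hpb0, hpbq⟩
    have hsubgen : ∀ (f : ℕ → ℝ), (∀ i, i ≠ a → i ≠ b → f i = p i) →
        ∀ c, (¬ (0 < f c ∧ f c < q)) → c ∈ Fr →
        (Icc 1 N).filter (fun i => 0 < f i ∧ f i < q) ⊆ Fr.erase c := by
      intro f hfo c hfc hcFr i hi
      rw [Finset.mem_filter] at hi
      rw [Finset.mem_erase]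
      constructor
      · rintro rfl; exact hfc hi.2
      · rcases eq_or_ne i a with rfl | hia
        · exact haFr
        rcases eq_or_ne i b with rfl | hib
        · exact hbFr
        · rw [hFr, Finset.mem_filter]
          rw [hfo i hia hib] at hi
          exact ⟨hi.1, hi.2⟩
    have hcard' : ((Icc 1 N).filter (fun i => 0 < p' i ∧ p' i < q)).card ≤ m := by
      have : ∃ c ∈ Fr, ¬ (0 < p' c ∧ p' c < q) := by
        rcases min_cases (q - p a) (p b) with ⟨h, -⟩ | ⟨h, -⟩
        · exact ⟨a, haFr, by rw [hp'a, hε, h]; rintro ⟨-, h2⟩; linarith⟩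
        · exact ⟨b, hbFr, by rw [hp'b, hε, h]; rintro ⟨h1, -⟩; linarith⟩
      obtain ⟨c, hcFr, hc⟩ := this
      calc ((Icc 1 N).filter (fun i => 0 < p' i ∧ p' i < q)).card
          ≤ (Fr.erase c).card := Finset.card_le_card (hsubgen p' hp'o c hc hcFr)
        _ = Fr.card - 1 := Finset.card_erase_of_mem hcFr
        _ ≤ m := by omega
    have hcard'' : ((Icc 1 N).filter (fun i => 0 < p'' i ∧ p'' i < q)).card ≤ m := by
      have : ∃ c ∈ Fr, ¬ (0 < p'' c ∧ p'' c < q) := by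
        rcases min_cases (p a) (q - p b) with ⟨h, -⟩ | ⟨h, -⟩
        · exact ⟨a, haFr, by rw [hp''a, hδ, h]; rintro ⟨h1, -⟩; linarith⟩
        · exact ⟨b, hbFr, by rw [hp''b, hδ, h]; rintro ⟨-, h2⟩; linarith⟩
      obtain ⟨c, hcFr, hc⟩ := this
      calc ((Icc 1 N).filter (fun i => 0 < p'' i ∧ p'' i < q)).card
          ≤ (Fr.erase c).card := Finset.card_le_card (hsubgen p'' hp''o c hc hcFr)
        _ = Fr.card - 1 := Finset.card_erase_of_mem hcFr
        _ ≤ m := by omega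
    obtain ⟨ψ', hψ'0, hψ's, hψ'q, hψ'm⟩ := ih q p' hq h0' h1' hsp' hcard'
    obtain ⟨ψ'', hψ''0, hψ''s, hψ''q, hψ''m⟩ := ih q p'' hq h0'' h1'' hsp'' hcard''
    have hεδ : 0 < ε + δ := by linarith
    set c1 := δ / (ε + δ) with hc1
    set c2 := ε / (ε + δ) with hc2
    have hc10 : 0 ≤ c1 := div_nonneg (le_of_lt hδ0) (le_of_lt hεδ)
    have hc20 : 0 ≤ c2 := div_nonneg (le_of_lt hε0) (le_of_lt hεδ)
    have hc12 : c1 + c2 = 1 := by rw [hc1, hc2]; field_simp; ring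
    have hbal : c1 * ε = c2 * δ := by rw [hc1, hc2]; field_simp
    refine ⟨fun S => c1 * ψ' S + c2 * ψ'' S, ?_, ?_, ?_, ?_⟩
    · intro S
      exact add_nonneg (mul_nonneg hc10 (hψ'0 S)) (mul_nonneg hc20 (hψ''0 S))
    · intro S hS
      by_cases h' : ψ' S = 0
      · by_cases h'' : ψ'' S = 0
        · simp [h', h''] at hS
        · exact hψ''s S h''
      · exact hψ's S h'
    · rw [Finset.sum_add_distrib, ← Finset.mul_sum, ← Finset.mul_sum, hψ'q, hψ''q]
      linear_combination q * hc12
    · intro i hi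
      rw [Finset.sum_add_distrib, ← Finset.mul_sum, ← Finset.mul_sum, hψ'm i hi, hψ''m i hi]
      rcases eq_or_ne i a with rfl | hia
      · rw [hp'a, hp''a]; linear_combination (p i) * hc12 + hbal
      rcases eq_or_ne i b with rfl | hib
      · rw [hp'b, hp''b]; linear_combination (p i) * hc12 - hbal
      · rw [hp'o i hia hib, hp''o i hia hib]; linear_combination (p i) * hc12

set_option maxHeartbeats 1000000 in
lemma dirLE (N : ℕ) (hN : 1 ≤ N) (F r : ℕ → ℝ)
    (hrnn : ∀ i, i ≤ N → 0 ≤ r i)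
    (μ1 : ℝ) (hμ0 : 0 < μ1) (hμ1 : μ1 < 1)
    (φ : ℕ → Finset ℕ → ℝ) (hφ : IsScheme N φ) (hper : Persuasive N F r μ1 φ) :
    (∀ i ∈ Icc 1 N, ∀ k ∈ Icc 1 N, 0 ≤ pOf N φ i k) ∧
    (∀ i ∈ Icc 1 N, 0 ≤ ∑ k ∈ Icc 1 N, pOf N φ i k * (F k - r i)) ∧
    (∀ i ∈ Icc 1 N,
      ∑ k ∈ Icc 1 (N - 1),
          ((1 / (k : ℝ)) * (∑ j ∈ Icc 1 N, pOf N φ j k) - pOf N φ i k) * (F (k + 1) - r i) +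
        (1 - ∑ k ∈ Icc 1 N, (1 / (k : ℝ)) * ∑ j ∈ Icc 1 N, pOf N φ j k) * (F 1 - r i)
        ≤ ((1 - μ1) / μ1) * r i) ∧
    (∑ k ∈ Icc 1 N, (1 / (k : ℝ)) * ∑ i ∈ Icc 1 N, pOf N φ i k ≤ 1) ∧
    (∀ i ∈ Icc 1 N, ∀ k ∈ Icc 1 N, (k : ℝ) * pOf N φ i k ≤ ∑ j ∈ Icc 1 N, pOf N φ j k) ∧
    EW N F r μ1 φ ≤ μ1 * ∑ k ∈ Icc 1 N, ∑ i ∈ Icc 1 N, pOf N φ i k * (F k - r i) := by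
  obtain ⟨hφ0, hφ1⟩ := hφ
  have h0m : (0 : ℕ) ∈ ({0, 1} : Finset ℕ) := by simp
  have h1m : (1 : ℕ) ∈ ({0, 1} : Finset ℕ) := by simp
  have hφ0nn := hφ0 0 h0m
  have hφ1nn := hφ0 1 h1m
  have hφ0sum := hφ1 0 h0m
  have hφ1sum := hφ1 1 h1m
  set qk := fun k => ∑ S ∈ (Icc 1 N).powerset.filter (fun S => S.card = k), φ 1 S with hqk
  have hqknn : ∀ k, 0 ≤ qk k := fun k =>
    Finset.sum_nonneg (fun S hS => hφ1nn S (Finset.mem_filter.mp hS).1)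
  -- pOf nonneg
  have hpnn : ∀ i k, 0 ≤ pOf N φ i k := fun i k =>
    Finset.sum_nonneg (fun S hS => hφ1nn S (Finset.mem_filter.mp hS).1)
  -- pf1 : ∑_j pOf j k = k * qk k
  have pf1 : ∀ k, ∑ j ∈ Icc 1 N, pOf N φ j k = (k : ℝ) * qk k := by
    intro k
    unfold pOf
    have e1 : ∀ j, ∑ S ∈ (Icc 1 N).powerset.filter (fun S => j ∈ S ∧ S.card = k), φ 1 S
        = ∑ S ∈ (Icc 1 N).powerset.filter (fun S => S.card = k),
            if j ∈ S then φ 1 S else 0 := by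
      intro j
      rw [filter_comm_mem, Finset.sum_filter]
    rw [Finset.sum_congr rfl (fun j _ => e1 j), Finset.sum_comm, hqk, Finset.mul_sum]
    apply Finset.sum_congr rfl
    intro S hS
    rw [Finset.sum_ite_mem,
      Finset.inter_eq_right.mpr (Finset.mem_powerset.mp (Finset.mem_filter.mp hS).1),
      Finset.sum_const, nsmul_eq_mul, (Finset.mem_filter.mp hS).2]
  -- pf2 : (1/k) * ∑_j pOf j k = qk k  for k ≥ 1
  have pf2 : ∀ k : ℕ, 1 ≤ k → (1 / (k : ℝ)) * ∑ j ∈ Icc 1 N, pOf N φ j k = qk k := by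
    intro k hk
    have hk0 : (k : ℝ) ≠ 0 := Nat.cast_ne_zero.mpr (by omega)
    rw [pf1 k]
    field_simp
  -- decomposition qk = pOf + m
  set mik := fun (i k : ℕ) => ∑ S ∈ (Icc 1 N).powerset.filter (fun S => i ∉ S ∧ S.card = k), φ 1 S
    with hmik
  have hmnn : ∀ i k, 0 ≤ mik i k := fun i k =>
    Finset.sum_nonneg (fun S hS => hφ1nn S (Finset.mem_filter.mp hS).1)
  have pf3 : ∀ i k, qk k = pOf N φ i k + mik i k := by
    intro i k
    unfold pOf
    simp only [hmik, hqk]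
    rw [filter_comm_mem, filter_comm_not_mem]
    exact (Finset.sum_filter_add_sum_filter_not
      ((Icc 1 N).powerset.filter (fun S => S.card = k)) (fun S => i ∈ S) (φ 1)).symm
  -- total mass
  have pf4 : φ 1 ∅ + ∑ k ∈ Icc 1 N, qk k = 1 := by
    rw [← total_split N (φ 1)]; exact hφ1sum
  have hφ1e : 0 ≤ φ 1 ∅ := hφ1nn ∅ (by simp)
  -- (C)
  have hC : ∑ k ∈ Icc 1 N, (1 / (k : ℝ)) * ∑ i ∈ Icc 1 N, pOf N φ i k ≤ 1 := by
    have : ∑ k ∈ Icc 1 N, (1 / (k : ℝ)) * ∑ i ∈ Icc 1 N, pOf N φ i k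
        = ∑ k ∈ Icc 1 N, qk k := by
      apply Finset.sum_congr rfl
      intro k hk
      exact pf2 k (Finset.mem_Icc.mp hk).1
    rw [this]; linarith
  have hCeq : ∑ k ∈ Icc 1 N, (1 / (k : ℝ)) * ∑ i ∈ Icc 1 N, pOf N φ i k
      = ∑ k ∈ Icc 1 N, qk k := by
    apply Finset.sum_congr rfl
    intro k hk
    exact pf2 k (Finset.mem_Icc.mp hk).1
  -- (V)
  have hV : ∀ i ∈ Icc 1 N, ∀ k ∈ Icc 1 N, (k : ℝ) * pOf N φ i k ≤ ∑ j ∈ Icc 1 N, pOf N φ j k := by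
    intro i _ k _
    rw [pf1 k]
    have h1 : pOf N φ i k ≤ qk k := by
      have := pf3 i k; have := hmnn i k; linarith
    exact mul_le_mul_of_nonneg_left h1 (Nat.cast_nonneg k)
  -- (M)
  have hM : ∀ i ∈ Icc 1 N, 0 ≤ ∑ k ∈ Icc 1 N, pOf N φ i k * (F k - r i) := by
    intro i hi
    obtain ⟨hmove, -⟩ := hper i hi
    have hT0 : ∑ S ∈ (Icc 1 N).powerset.filter (fun S => i ∈ S),
        φ 0 S * ((0 : ℝ) * F S.card - r i) ≤ 0 := by
      apply Finset.sum_nonpos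
      intro S hS
      have h1 := hφ0nn S (Finset.mem_filter.mp hS).1
      have h2 := hrnn i (Finset.mem_Icc.mp hi).2
      nlinarith
    have hT1 : ∑ S ∈ (Icc 1 N).powerset.filter (fun S => i ∈ S),
        φ 1 S * ((1 : ℝ) * F S.card - r i)
        = ∑ k ∈ Icc 1 N, pOf N φ i k * (F k - r i) := by
      have : ∀ S, φ 1 S * ((1 : ℝ) * F S.card - r i)
          = φ 1 S * ((fun n => F n - r i) S.card) := by intro S; simp
      rw [Finset.sum_congr rfl (fun S _ => this S), fiber_move N (φ 1) i (fun n => F n - r i)]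
      simp only [pOf]
    rw [hT1] at hmove
    nlinarith
  -- (S)
  have hS : ∀ i ∈ Icc 1 N,
      ∑ k ∈ Icc 1 (N - 1),
          ((1 / (k : ℝ)) * (∑ j ∈ Icc 1 N, pOf N φ j k) - pOf N φ i k) * (F (k + 1) - r i) +
        (1 - ∑ k ∈ Icc 1 N, (1 / (k : ℝ)) * ∑ j ∈ Icc 1 N, pOf N φ j k) * (F 1 - r i)
        ≤ ((1 - μ1) / μ1) * r i := by
    intro i hi
    obtain ⟨-, hstay⟩ := hper i hi
    have hri := hrnn i (Finset.mem_Icc.mp hi).2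
    -- θ = 0 side
    have hU0 : -(r i) ≤ ∑ S ∈ (Icc 1 N).powerset.filter (fun S => i ∉ S),
        φ 0 S * ((0 : ℝ) * F (S.card + 1) - r i) := by
      have e : ∀ S, φ 0 S * ((0 : ℝ) * F (S.card + 1) - r i) = -(r i) * φ 0 S := by
        intro S; ring
      rw [Finset.sum_congr rfl (fun S _ => e S), ← Finset.mul_sum]
      have hle : ∑ S ∈ (Icc 1 N).powerset.filter (fun S => i ∉ S), φ 0 S ≤ 1 := by
        rw [← hφ0sum]
        exact Finset.sum_le_sum_of_subset_of_nonneg (Finset.filter_subset _ _)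
          (fun S hS _ => hφ0nn S hS)
      nlinarith
    -- θ = 1 side equals LP expression
    have hU1 : ∑ S ∈ (Icc 1 N).powerset.filter (fun S => i ∉ S),
        φ 1 S * ((1 : ℝ) * F (S.card + 1) - r i)
        = ∑ k ∈ Icc 1 (N - 1),
            ((1 / (k : ℝ)) * (∑ j ∈ Icc 1 N, pOf N φ j k) - pOf N φ i k) * (F (k + 1) - r i) +
          (1 - ∑ k ∈ Icc 1 N, (1 / (k : ℝ)) * ∑ j ∈ Icc 1 N, pOf N φ j k) * (F 1 - r i) := by
      have e : ∀ S, φ 1 S * ((1 : ℝ) * F (S.card + 1) - r i)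
          = φ 1 S * ((fun n => F n - r i) (S.card + 1)) := by intro S; simp
      rw [Finset.sum_congr rfl (fun S _ => e S),
        fiber_stay N (φ 1) i hi (fun n => F n - r i),
        split_zero N (fun k => (∑ S ∈ (Icc 1 N).powerset.filter
          (fun S => i ∉ S ∧ S.card = k), φ 1 S) * ((fun n => F n - r i) (k + 1)))]
      have h0fib : (∑ S ∈ (Icc 1 N).powerset.filter (fun S => i ∉ S ∧ S.card = 0), φ 1 S)
          = 1 - ∑ k ∈ Icc 1 N, qk k := by
        rw [filter_stay_zero N i, Finset.sum_singleton]; linarith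
      have hrest : ∀ k ∈ Icc 1 (N - 1),
          (∑ S ∈ (Icc 1 N).powerset.filter (fun S => i ∉ S ∧ S.card = k), φ 1 S)
            * ((fun n => F n - r i) (k + 1))
          = ((1 / (k : ℝ)) * (∑ j ∈ Icc 1 N, pOf N φ j k) - pOf N φ i k)
              * (F (k + 1) - r i) := by
        intro k hk
        have hk1 : 1 ≤ k := (Finset.mem_Icc.mp hk).1
        have : (∑ S ∈ (Icc 1 N).powerset.filter (fun S => i ∉ S ∧ S.card = k), φ 1 S)
            = (1 / (k : ℝ)) * (∑ j ∈ Icc 1 N, pOf N φ j k) - pOf N φ i k := by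
          rw [pf2 k hk1]
          have h3 := pf3 i k
          simp only [hmik] at h3
          linarith
        rw [this]
      rw [Finset.sum_congr rfl hrest, h0fib, hCeq]
      ring
    rw [hU1] at hstay
    -- combine
    have hmul := mul_le_mul_of_nonneg_left hU0 (by linarith : (0:ℝ) ≤ 1 - μ1)
    rw [div_mul_eq_mul_div, le_div_iff₀ hμ0]
    nlinarith [hmul, hstay]
  refine ⟨fun i _ k _ => hpnn i k, hM, hS, hC, hV, ?_⟩
  -- value
  unfold EW
  have hE0 : ∑ S ∈ (Icc 1 N).powerset, φ 0 S * W F r 0 S ≤ 0 := by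
    apply Finset.sum_nonpos
    intro S hS
    have h1 := hφ0nn S hS
    have h2 : W F r 0 S ≤ 0 := by
      unfold W
      simp only [Nat.cast_zero, zero_mul, zero_sub, neg_nonpos]
      apply Finset.sum_nonneg
      intro j hj
      have hjm := Finset.mem_powerset.mp hS hj
      exact hrnn j (Finset.mem_Icc.mp hjm).2
    nlinarith
  have hE1 : ∑ S ∈ (Icc 1 N).powerset, φ 1 S * W F r 1 S
      = ∑ k ∈ Icc 1 N, ∑ i ∈ Icc 1 N, pOf N φ i k * (F k - r i) := by
    have e : ∀ S ∈ (Icc 1 N).powerset, φ 1 S * W F r 1 S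
        = φ 1 S * ∑ j ∈ S, (F S.card - r j) := by
      intro S hS
      unfold W
      rw [Finset.sum_sub_distrib, Finset.sum_const, nsmul_eq_mul]
      push_cast
      ring
    rw [Finset.sum_congr rfl e, swap_sum N (φ 1) (fun j T => F T.card - r j)]
    have e2 : ∀ i ∈ Icc 1 N,
        ∑ S ∈ (Icc 1 N).powerset.filter (fun S => i ∈ S), φ 1 S * (F S.card - r i)
        = ∑ k ∈ Icc 1 N, pOf N φ i k * (F k - r i) := by
      intro i _
      have := fiber_move N (φ 1) i (fun n => F n - r i)
      simp only [pOf]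
      exact this
    rw [Finset.sum_congr rfl e2, Finset.sum_comm]
  rw [hE1]
  have h10 : 0 ≤ 1 - μ1 := by linarith
  nlinarith [hE0, h10]

set_option maxHeartbeats 1000000 in
lemma dirGE (N : ℕ) (hN : 1 ≤ N) (F r : ℕ → ℝ) (μ1 : ℝ) (hμ0 : 0 < μ1) (hμ1 : μ1 < 1)
    (p : ℕ → ℕ → ℝ)
    (hp0 : ∀ i ∈ Icc 1 N, ∀ k ∈ Icc 1 N, 0 ≤ p i k)
    (hpM : ∀ i ∈ Icc 1 N, 0 ≤ ∑ k ∈ Icc 1 N, p i k * (F k - r i))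
    (hpS : ∀ i ∈ Icc 1 N,
      ∑ k ∈ Icc 1 (N - 1),
          ((1 / (k : ℝ)) * (∑ j ∈ Icc 1 N, p j k) - p i k) * (F (k + 1) - r i) +
        (1 - ∑ k ∈ Icc 1 N, (1 / (k : ℝ)) * ∑ j ∈ Icc 1 N, p j k) * (F 1 - r i)
        ≤ ((1 - μ1) / μ1) * r i)
    (hpC : ∑ k ∈ Icc 1 N, (1 / (k : ℝ)) * ∑ i ∈ Icc 1 N, p i k ≤ 1)
    (hpV : ∀ i ∈ Icc 1 N, ∀ k ∈ Icc 1 N, (k : ℝ) * p i k ≤ ∑ j ∈ Icc 1 N, p j k) :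
    ∃ φ : ℕ → Finset ℕ → ℝ, IsScheme N φ ∧ Persuasive N F r μ1 φ ∧
      EW N F r μ1 φ = μ1 * ∑ k ∈ Icc 1 N, ∑ i ∈ Icc 1 N, p i k * (F k - r i) := by
  classical
  set Q : ℕ → ℝ := fun k => (1 / (k : ℝ)) * ∑ j ∈ Icc 1 N, p j k with hQ
  have hQnn : ∀ k ∈ Icc 1 N, 0 ≤ Q k := by
    intro k hk
    apply mul_nonneg (by positivity)
    exact Finset.sum_nonneg (fun j hj => hp0 j hj k hk)
  have hcardIcc : (Icc 1 N).card = N := by rw [Nat.card_Icc]; omega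
  have hub : ∀ k ∈ Icc 1 N, ∀ i ∈ Icc 1 N, p i k ≤ Q k := by
    intro k hk i hi
    have hk1 : 1 ≤ k := (Finset.mem_Icc.mp hk).1
    have hkR : (0 : ℝ) < k := by exact_mod_cast hk1
    have h2 : p i k * k ≤ ∑ j ∈ Icc 1 N, p j k := by
      have := hpV i hi k hk; nlinarith
    simp only [hQ, one_div_mul_eq_div]
    exact (le_div_iff₀ hkR).mpr h2
  have hsumQ : ∀ k ∈ Icc 1 N, ∑ i ∈ Icc 1 N, p i k = k * Q k := by
    intro k hk
    have hk1 : 1 ≤ k := (Finset.mem_Icc.mp hk).1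
    have hkR : (k : ℝ) ≠ 0 := by
      have : (0:ℝ) < k := by exact_mod_cast hk1
      exact ne_of_gt this
    simp only [hQ]
    rw [← mul_assoc, mul_one_div_cancel hkR, one_mul]
  have H : ∀ k : ℕ, ∃ ψ : Finset ℕ → ℝ, (∀ S, 0 ≤ ψ S) ∧ (k ∈ Icc 1 N →
      ((∀ S, ψ S ≠ 0 → S ⊆ Icc 1 N ∧ S.card = k) ∧
       (∑ S ∈ (Icc 1 N).powerset, ψ S = Q k) ∧
       (∀ i ∈ Icc 1 N, ∑ S ∈ (Icc 1 N).powerset.filter (fun S => i ∈ S), ψ S = p i k))) := by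
    intro k
    by_cases hk : k ∈ Icc 1 N
    · have hk1 : 1 ≤ k := (Finset.mem_Icc.mp hk).1
      have hkN : k ≤ N := (Finset.mem_Icc.mp hk).2
      obtain ⟨ψ, h1, h2, h3, h4⟩ := exists_marginal N k hk1 hkN N (Q k) (fun i => p i k)
        (hQnn k hk) (fun i hi => hp0 i hi k hk) (fun i hi => hub k hk i hi) (hsumQ k hk)
        (le_trans (Finset.card_le_card (Finset.filter_subset _ _)) (le_of_eq hcardIcc))
      exact ⟨ψ, h1, fun _ => ⟨h2, h3, h4⟩⟩
    · exact ⟨fun _ => 0, fun _ => le_refl 0, fun hk' => absurd hk' hk⟩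
  choose Ψ hΨnn hΨ using H
  set φ : ℕ → Finset ℕ → ℝ := fun θ S =>
    if θ = 0 then (if S = ∅ then 1 else 0)
    else ((if S = ∅ then 1 - ∑ k ∈ Icc 1 N, Q k else 0) + ∑ k ∈ Icc 1 N, Ψ k S) with hφdef
  have hφ0S : ∀ S, φ 0 S = if S = ∅ then 1 else 0 := fun S => by simp [hφdef]
  have hφ1S : ∀ S, φ 1 S
      = (if S = ∅ then 1 - ∑ k ∈ Icc 1 N, Q k else 0) + ∑ k ∈ Icc 1 N, Ψ k S := fun S => by
    simp [hφdef]
  have hQle1 : ∑ k ∈ Icc 1 N, Q k ≤ 1 := by simp only [hQ]; exact hpC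
  have hempP : (∅ : Finset ℕ) ∈ (Icc 1 N).powerset := by simp
  -- derived facts about Ψ
  have hΨmarg : ∀ k ∈ Icc 1 N, ∀ i ∈ Icc 1 N,
      ∑ S ∈ (Icc 1 N).powerset.filter (fun S => i ∈ S), Ψ k S = p i k :=
    fun k hk i hi => ((hΨ k hk).2.2) i hi
  have hΨtot : ∀ k ∈ Icc 1 N, ∑ S ∈ (Icc 1 N).powerset, Ψ k S = Q k :=
    fun k hk => ((hΨ k hk).2.1)
  have hΨspt : ∀ k ∈ Icc 1 N, ∀ S, Ψ k S ≠ 0 → S ⊆ Icc 1 N ∧ S.card = k :=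
    fun k hk => ((hΨ k hk).1)
  have hΨnot : ∀ k ∈ Icc 1 N, ∀ i,
      ∑ S ∈ (Icc 1 N).powerset.filter (fun S => i ∉ S), Ψ k S
        = Q k - (∑ S ∈ (Icc 1 N).powerset.filter (fun S => i ∈ S), Ψ k S) := by
    intro k hk i
    have := Finset.sum_filter_add_sum_filter_not (Icc 1 N).powerset (fun S => i ∈ S) (Ψ k)
    rw [← hΨtot k hk]
    linarith
  -- support congruence helper
  have suppc : ∀ k ∈ Icc 1 N, ∀ (s : Finset (Finset ℕ)) (f g : Finset ℕ → ℝ),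
      (∀ S, S.card = k → S ⊆ Icc 1 N → f S = g S) →
      ∑ S ∈ s, Ψ k S * f S = ∑ S ∈ s, Ψ k S * g S := by
    intro k hk s f g hfg
    apply Finset.sum_congr rfl
    intro S _
    by_cases h : Ψ k S = 0
    · rw [h, zero_mul, zero_mul]
    · obtain ⟨h1, h2⟩ := hΨspt k hk S h
      rw [hfg S h2 h1]
  -- expand sums of φ1 * c over a set of subsets
  have expand : ∀ (s : Finset (Finset ℕ)) (c : Finset ℕ → ℝ),
      ∑ S ∈ s, φ 1 S * c S
        = (∑ S ∈ s, (if S = ∅ then (1 - ∑ k ∈ Icc 1 N, Q k) * c S else 0))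
          + ∑ k ∈ Icc 1 N, ∑ S ∈ s, Ψ k S * c S := by
    intro s c
    have e : ∀ S ∈ s, φ 1 S * c S
        = (if S = ∅ then (1 - ∑ k ∈ Icc 1 N, Q k) * c S else 0)
          + ∑ k ∈ Icc 1 N, Ψ k S * c S := by
      intro S _
      rw [hφ1S S, add_mul, Finset.sum_mul]
      congr 1
      split <;> ring
    rw [Finset.sum_congr rfl e, Finset.sum_add_distrib, Finset.sum_comm]
  have hNmem : N ∈ Icc 1 N := by rw [Finset.mem_Icc]; omega
  have hQNeq : ∀ j ∈ Icc 1 N, Q N - p j N = 0 := by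
    have hnn : ∀ j ∈ Icc 1 N, 0 ≤ Q N - p j N := fun j hj => by linarith [hub N hNmem j hj]
    have hsum0 : ∑ j ∈ Icc 1 N, (Q N - p j N) = 0 := by
      rw [Finset.sum_sub_distrib, Finset.sum_const, hcardIcc, nsmul_eq_mul, hsumQ N hNmem]
      ring
    intro j hj
    exact (Finset.sum_eq_zero_iff_of_nonneg hnn).mp hsum0 j hj
  have hsplitN : ∀ g : ℕ → ℝ, ∑ k ∈ Icc 1 N, g k = ∑ k ∈ Icc 1 (N - 1), g k + g N := by
    intro g
    have h : Icc 1 N = insert N (Icc 1 (N - 1)) := by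
      ext x; simp only [Finset.mem_Icc, Finset.mem_insert]; omega
    rw [h, Finset.sum_insert (by simp only [Finset.mem_Icc]; omega)]
    ring
  -- IsScheme
  have hIs : IsScheme N φ := by
    constructor
    · intro θ hθ S hS
      simp only [Finset.mem_insert, Finset.mem_singleton] at hθ
      rcases hθ with rfl | rfl
      · rw [hφ0S]; split <;> norm_num
      · rw [hφ1S]
        apply add_nonneg
        · split
          · linarith [hQle1]
          · exact le_refl 0
        · exact Finset.sum_nonneg (fun k _ => hΨnn k S)
    · intro θ hθ
      simp only [Finset.mem_insert, Finset.mem_singleton] at hθ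
      rcases hθ with rfl | rfl
      · simp only [hφ0S]
        rw [Finset.sum_ite_eq' _ ∅ (fun _ => (1:ℝ)), if_pos hempP]
      · simp only [hφ1S]
        rw [Finset.sum_add_distrib,
          Finset.sum_ite_eq' _ ∅ (fun _ => 1 - ∑ k ∈ Icc 1 N, Q k), if_pos hempP,
          Finset.sum_comm, Finset.sum_congr rfl hΨtot]
        ring
  -- Persuasive
  have hPer : Persuasive N F r μ1 φ := by
    intro i hi
    constructor
    · -- move
      have h0 : ∑ S ∈ (Icc 1 N).powerset.filter (fun S => i ∈ S),
          φ 0 S * ((0:ℝ) * F S.card - r i) = 0 := by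
        apply Finset.sum_eq_zero
        intro S hS
        have hiS : i ∈ S := (Finset.mem_filter.mp hS).2
        rw [hφ0S, if_neg (Finset.ne_empty_of_mem hiS), zero_mul]
      have h1 : ∑ S ∈ (Icc 1 N).powerset.filter (fun S => i ∈ S),
          φ 1 S * ((1:ℝ) * F S.card - r i)
          = ∑ k ∈ Icc 1 N, p i k * (F k - r i) := by
        rw [expand ((Icc 1 N).powerset.filter (fun S => i ∈ S))
          (fun S => (1:ℝ) * F S.card - r i)]
        have hz : (∑ S ∈ (Icc 1 N).powerset.filter (fun S => i ∈ S),
            (if S = ∅ then (1 - ∑ k ∈ Icc 1 N, Q k) * ((1:ℝ) * F S.card - r i) else 0)) = 0 := by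
          apply Finset.sum_eq_zero
          intro S hS
          have hiS : i ∈ S := (Finset.mem_filter.mp hS).2
          rw [if_neg (Finset.ne_empty_of_mem hiS)]
        rw [hz, zero_add]
        apply Finset.sum_congr rfl
        intro k hk
        rw [suppc k hk _ (fun S => (1:ℝ) * F S.card - r i) (fun S => F k - r i)
            (fun S hc _ => by simp only [hc, one_mul]),
          ← Finset.sum_mul, hΨmarg k hk i hi]
      rw [h0, h1]
      have := hpM i hi
      nlinarith
    · -- stay
      have h0 : ∑ S ∈ (Icc 1 N).powerset.filter (fun S => i ∉ S),
          φ 0 S * ((0:ℝ) * F (S.card + 1) - r i) = -(r i) := by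
        have e : ∀ S ∈ (Icc 1 N).powerset.filter (fun S => i ∉ S),
            φ 0 S * ((0:ℝ) * F (S.card + 1) - r i)
            = if S = ∅ then ((0:ℝ) * F (S.card + 1) - r i) else 0 := by
          intro S _
          rw [hφ0S]; split <;> ring
        rw [Finset.sum_congr rfl e,
          Finset.sum_ite_eq' _ ∅ (fun S : Finset ℕ => (0:ℝ) * F (S.card + 1) - r i), if_pos]
        · simp
        · rw [Finset.mem_filter]; exact ⟨hempP, Finset.notMem_empty i⟩
      have h1 : ∑ S ∈ (Icc 1 N).powerset.filter (fun S => i ∉ S),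
          φ 1 S * ((1:ℝ) * F (S.card + 1) - r i)
          = ∑ k ∈ Icc 1 (N - 1), (Q k - p i k) * (F (k + 1) - r i)
            + (1 - ∑ k ∈ Icc 1 N, Q k) * (F 1 - r i) := by
        rw [expand ((Icc 1 N).powerset.filter (fun S => i ∉ S))
          (fun S => (1:ℝ) * F (S.card + 1) - r i)]
        have hz : (∑ S ∈ (Icc 1 N).powerset.filter (fun S => i ∉ S),
            (if S = ∅ then (1 - ∑ k ∈ Icc 1 N, Q k) * ((1:ℝ) * F (S.card + 1) - r i) else 0))
            = (1 - ∑ k ∈ Icc 1 N, Q k) * (F 1 - r i) := by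
          rw [Finset.sum_ite_eq' _ ∅
            (fun S : Finset ℕ => (1 - ∑ k ∈ Icc 1 N, Q k) * ((1:ℝ) * F (S.card + 1) - r i)), if_pos]
          · norm_num
          · rw [Finset.mem_filter]; exact ⟨hempP, Finset.notMem_empty i⟩
        have hrest : ∀ k ∈ Icc 1 N,
            ∑ S ∈ (Icc 1 N).powerset.filter (fun S => i ∉ S),
              Ψ k S * ((1:ℝ) * F (S.card + 1) - r i)
            = (Q k - p i k) * (F (k + 1) - r i) := by
          intro k hk
          rw [suppc k hk _ (fun S => (1:ℝ) * F (S.card + 1) - r i) (fun S => F (k + 1) - r i)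
              (fun S hc _ => by simp only [hc, one_mul]),
            ← Finset.sum_mul, hΨnot k hk i, hΨmarg k hk i hi]
        rw [hz, Finset.sum_congr rfl hrest,
          hsplitN (fun k => (Q k - p i k) * (F (k + 1) - r i)), hQNeq i hi]
        ring
      rw [h0, h1]
      have hlp := hpS i hi
      have hQform : ∑ k ∈ Icc 1 (N - 1), (Q k - p i k) * (F (k + 1) - r i)
            + (1 - ∑ k ∈ Icc 1 N, Q k) * (F 1 - r i)
          = ∑ k ∈ Icc 1 (N - 1),
              ((1 / (k : ℝ)) * (∑ j ∈ Icc 1 N, p j k) - p i k) * (F (k + 1) - r i) +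
            (1 - ∑ k ∈ Icc 1 N, (1 / (k : ℝ)) * ∑ j ∈ Icc 1 N, p j k) * (F 1 - r i) := by
        simp only [hQ]
      rw [hQform]
      have hmul := mul_le_mul_of_nonneg_left hlp hμ0.le
      have hxx : μ1 * ((1 - μ1) / μ1 * r i) = (1 - μ1) * r i := by field_simp
      nlinarith [hmul, hxx]
  refine ⟨φ, hIs, hPer, ?_⟩
  unfold EW
  have hE0 : ∑ S ∈ (Icc 1 N).powerset, φ 0 S * W F r 0 S = 0 := by
    have e : ∀ S ∈ (Icc 1 N).powerset, φ 0 S * W F r 0 S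
        = if S = ∅ then W F r 0 S else 0 := by
      intro S _
      rw [hφ0S]; split <;> ring
    rw [Finset.sum_congr rfl e, Finset.sum_ite_eq' _ ∅ (fun S => W F r 0 S), if_pos hempP]
    simp [W]
  have hE1 : ∑ S ∈ (Icc 1 N).powerset, φ 1 S * W F r 1 S
      = ∑ k ∈ Icc 1 N, ∑ j ∈ Icc 1 N, p j k * (F k - r j) := by
    rw [expand ((Icc 1 N).powerset) (fun S => W F r 1 S)]
    have hz : (∑ S ∈ (Icc 1 N).powerset,
        (if S = ∅ then (1 - ∑ k ∈ Icc 1 N, Q k) * W F r 1 S else 0)) = 0 := by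
      rw [Finset.sum_ite_eq' _ ∅ (fun S => (1 - ∑ k ∈ Icc 1 N, Q k) * W F r 1 S), if_pos hempP]
      simp [W]
    rw [hz, zero_add]
    apply Finset.sum_congr rfl
    intro k hk
    have hfg : ∀ S : Finset ℕ, S.card = k → S ⊆ Icc 1 N →
        W F r 1 S = ∑ j ∈ S, (F k - r j) := by
      intro S hc _
      unfold W
      rw [Finset.sum_sub_distrib, Finset.sum_const, nsmul_eq_mul, hc]
      push_cast
      ring
    rw [suppc k hk _ (fun S => W F r 1 S) (fun S => ∑ j ∈ S, (F k - r j)) hfg,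
      swap_sum N (Ψ k) (fun j _ => F k - r j)]
    apply Finset.sum_congr rfl
    intro j hj
    rw [← Finset.sum_mul, hΨmarg k hk j hj]
  rw [hE0, hE1]
  ring

set_option maxHeartbeats 1000000 in
/-- the optimal value over persuasive straightforward signaling schemes
equals μ(1) times the optimal value of the marginal linear program (LP.2). -/
theorem stmt6 (N : ℕ) (hN : 1 ≤ N) (F r : ℕ → ℝ)
    (hFnn : ∀ n, n ≤ N → 0 ≤ F n) (hF01 : F 0 = F 1)
    (hFmono : ∀ n, n + 1 ≤ N → F (n + 1) ≤ F n)
    (hr0 : r 0 = 0) (hrnn : ∀ i, i ≤ N → 0 ≤ r i)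
    (hrmono : ∀ i, i + 1 ≤ N → r i ≤ r (i + 1))
    (μ1 : ℝ) (hμ0 : 0 < μ1) (hμ1 : μ1 < 1) :
    sSup {w : ℝ | ∃ φ : ℕ → Finset ℕ → ℝ,
        IsScheme N φ ∧ Persuasive N F r μ1 φ ∧ w = EW N F r μ1 φ} =
    μ1 * sSup {v : ℝ | ∃ p : ℕ → ℕ → ℝ,
        (∀ i ∈ Icc 1 N, ∀ k ∈ Icc 1 N, 0 ≤ p i k) ∧
        (∀ i ∈ Icc 1 N, 0 ≤ ∑ k ∈ Icc 1 N, p i k * (F k - r i)) ∧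
        (∀ i ∈ Icc 1 N,
          ∑ k ∈ Icc 1 (N - 1),
              ((1 / (k : ℝ)) * (∑ j ∈ Icc 1 N, p j k) - p i k) * (F (k + 1) - r i) +
            (1 - ∑ k ∈ Icc 1 N, (1 / (k : ℝ)) * ∑ j ∈ Icc 1 N, p j k) * (F 1 - r i)
            ≤ ((1 - μ1) / μ1) * r i) ∧
        (∑ k ∈ Icc 1 N, (1 / (k : ℝ)) * ∑ i ∈ Icc 1 N, p i k ≤ 1) ∧
        (∀ i ∈ Icc 1 N, ∀ k ∈ Icc 1 N, (k : ℝ) * p i k ≤ ∑ j ∈ Icc 1 N, p j k) ∧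
        v = ∑ k ∈ Icc 1 N, ∑ i ∈ Icc 1 N, p i k * (F k - r i)} := by
  classical
  have hFanti : ∀ a b : ℕ, a ≤ b → b ≤ N → F b ≤ F a := by
    intro a b hab hbN
    have := mono_chain (f := fun n => -F n) (N := N)
      (fun i hi => by simpa using hFmono i hi) a b hab hbN
    simpa using this
  have hrchain : ∀ a b : ℕ, a ≤ b → b ≤ N → r a ≤ r b :=
    fun a b hab hbN => mono_chain hrmono a b hab hbN
  have hempP : (∅ : Finset ℕ) ∈ (Icc 1 N).powerset := by simp
  -- threshold scheme (for nonemptiness)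
  set m0 := Nat.findGreatest (fun j => r j ≤ F j) N with hm0
  have hm0N : m0 ≤ N := Nat.findGreatest_le N
  have hPm0 : r m0 ≤ F m0 := by
    have h := Nat.findGreatest_spec (P := fun j => r j ≤ F j) (m := 0) (n := N)
      (Nat.zero_le N) (by show r 0 ≤ F 0; rw [hr0]; exact hFnn 0 (Nat.zero_le N))
    exact h
  set S0 := Icc 1 m0 with hS0
  have hS0P : S0 ∈ (Icc 1 N).powerset :=
    Finset.mem_powerset.mpr (Finset.Icc_subset_Icc le_rfl hm0N)
  have hS0card : S0.card = m0 := by rw [hS0, Nat.card_Icc]; omega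
  set φd : ℕ → Finset ℕ → ℝ := fun θ S =>
    if θ = 0 then (if S = ∅ then 1 else 0) else (if S = S0 then 1 else 0) with hφd
  have hφd0 : ∀ S, φd 0 S = if S = ∅ then 1 else 0 := fun S => by simp [hφd]
  have hφd1 : ∀ S, φd 1 S = if S = S0 then 1 else 0 := fun S => by simp [hφd]
  have hIsd : IsScheme N φd := by
    constructor
    · intro θ hθ S hS
      simp only [Finset.mem_insert, Finset.mem_singleton] at hθ
      rcases hθ with rfl | rfl
      · rw [hφd0]; split <;> norm_num
      · rw [hφd1]; split <;> norm_num
    · intro θ hθ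
      simp only [Finset.mem_insert, Finset.mem_singleton] at hθ
      rcases hθ with rfl | rfl
      · simp only [hφd0]
        rw [Finset.sum_ite_eq' _ ∅ (fun _ => (1:ℝ)), if_pos hempP]
      · simp only [hφd1]
        rw [Finset.sum_ite_eq' _ S0 (fun _ => (1:ℝ)), if_pos hS0P]
  have hPerd : Persuasive N F r μ1 φd := by
    intro i hi
    obtain ⟨hi1, hiN⟩ := Finset.mem_Icc.mp hi
    have hri : 0 ≤ r i := hrnn i hiN
    constructor
    · -- move
      have h0 : ∑ S ∈ (Icc 1 N).powerset.filter (fun S => i ∈ S),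
          φd 0 S * ((0:ℝ) * F S.card - r i) = 0 := by
        apply Finset.sum_eq_zero
        intro S hS
        rw [hφd0, if_neg (Finset.ne_empty_of_mem (Finset.mem_filter.mp hS).2), zero_mul]
      have h1 : ∑ S ∈ (Icc 1 N).powerset.filter (fun S => i ∈ S),
          φd 1 S * ((1:ℝ) * F S.card - r i)
          = if S0 ∈ (Icc 1 N).powerset.filter (fun S => i ∈ S)
              then ((1:ℝ) * F S0.card - r i) else 0 := by
        have e : ∀ S ∈ (Icc 1 N).powerset.filter (fun S => i ∈ S),
            φd 1 S * ((1:ℝ) * F S.card - r i)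
            = if S = S0 then ((1:ℝ) * F S.card - r i) else 0 := by
          intro S _
          rw [hφd1]; split <;> ring
        rw [Finset.sum_congr rfl e,
          Finset.sum_ite_eq' _ S0 (fun S => (1:ℝ) * F S.card - r i)]
      rw [h0, h1]
      split
      · next hmem =>
        have hiS0 : i ∈ S0 := (Finset.mem_filter.mp hmem).2
        have him0 : i ≤ m0 := (Finset.mem_Icc.mp hiS0).2
        have : r i ≤ F m0 := le_trans (hrchain i m0 him0 hm0N) hPm0
        rw [hS0card]
        nlinarith
      · nlinarith
    · -- stay
      have h0 : ∑ S ∈ (Icc 1 N).powerset.filter (fun S => i ∉ S),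
          φd 0 S * ((0:ℝ) * F (S.card + 1) - r i) = -(r i) := by
        have e : ∀ S ∈ (Icc 1 N).powerset.filter (fun S => i ∉ S),
            φd 0 S * ((0:ℝ) * F (S.card + 1) - r i)
            = if S = ∅ then ((0:ℝ) * F (S.card + 1) - r i) else 0 := by
          intro S _
          rw [hφd0]; split <;> ring
        rw [Finset.sum_congr rfl e,
          Finset.sum_ite_eq' _ ∅ (fun S : Finset ℕ => (0:ℝ) * F (S.card + 1) - r i), if_pos]
        · ring
        · rw [Finset.mem_filter]; exact ⟨hempP, Finset.notMem_empty i⟩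
      have h1 : ∑ S ∈ (Icc 1 N).powerset.filter (fun S => i ∉ S),
          φd 1 S * ((1:ℝ) * F (S.card + 1) - r i)
          = if S0 ∈ (Icc 1 N).powerset.filter (fun S => i ∉ S)
              then ((1:ℝ) * F (S0.card + 1) - r i) else 0 := by
        have e : ∀ S ∈ (Icc 1 N).powerset.filter (fun S => i ∉ S),
            φd 1 S * ((1:ℝ) * F (S.card + 1) - r i)
            = if S = S0 then ((1:ℝ) * F (S.card + 1) - r i) else 0 := by
          intro S _
          rw [hφd1]; split <;> ring
        rw [Finset.sum_congr rfl e,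
          Finset.sum_ite_eq' _ S0 (fun S => (1:ℝ) * F (S.card + 1) - r i)]
      rw [h0, h1]
      split
      · next hmem =>
        have hiS0 : i ∉ S0 := (Finset.mem_filter.mp hmem).2
        rw [hS0] at hiS0
        have him0 : m0 < i := by
          rcases Nat.lt_or_ge m0 i with h | h
          · exact h
          · exact absurd (Finset.mem_Icc.mpr ⟨hi1, h⟩) hiS0
        have hm1N : m0 + 1 ≤ N := by omega
        have hnot : ¬ (r (m0 + 1) ≤ F (m0 + 1)) :=
          Nat.findGreatest_is_greatest (P := fun j => r j ≤ F j) (n := N)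
            (by rw [← hm0]; omega) hm1N
        have hFm1 : F (m0 + 1) < r (m0 + 1) := by linarith [lt_of_not_ge hnot]
        have hrle : r (m0 + 1) ≤ r i := hrchain (m0 + 1) i (by omega) hiN
        have hF0 : 0 ≤ F (m0 + 1) := hFnn (m0 + 1) hm1N
        rw [hS0card]
        nlinarith
      · nlinarith
  -- upper bound for LP values
  have hBub : ∀ p : ℕ → ℕ → ℝ, (∀ i ∈ Icc 1 N, ∀ k ∈ Icc 1 N, 0 ≤ p i k) →
      (∑ k ∈ Icc 1 N, (1 / (k : ℝ)) * ∑ i ∈ Icc 1 N, p i k ≤ 1) →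
      ∑ k ∈ Icc 1 N, ∑ i ∈ Icc 1 N, p i k * (F k - r i) ≤ N * F 1 := by
    intro p hp0 hpC
    have hF1 : 0 ≤ F 1 := hFnn 1 hN
    have step1 : ∀ k ∈ Icc 1 N, ∑ i ∈ Icc 1 N, p i k * (F k - r i)
        ≤ F 1 * ∑ i ∈ Icc 1 N, p i k := by
      intro k hk
      rw [Finset.mul_sum]
      apply Finset.sum_le_sum
      intro i hi
      have h1 : F k - r i ≤ F 1 := by
        have h2 := hFanti 1 k (Finset.mem_Icc.mp hk).1 (Finset.mem_Icc.mp hk).2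
        have h3 := hrnn i (Finset.mem_Icc.mp hi).2
        linarith
      have h4 := hp0 i hi k hk
      nlinarith
    have step2 : ∑ k ∈ Icc 1 N, ∑ i ∈ Icc 1 N, p i k ≤ (N : ℝ) := by
      have e : ∀ k ∈ Icc 1 N, ∑ i ∈ Icc 1 N, p i k
          ≤ (N : ℝ) * ((1 / (k : ℝ)) * ∑ i ∈ Icc 1 N, p i k) := by
        intro k hk
        have hk1 : 1 ≤ k := (Finset.mem_Icc.mp hk).1
        have hkN : k ≤ N := (Finset.mem_Icc.mp hk).2
        have hkR : (0:ℝ) < k := by exact_mod_cast hk1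
        have hnn : 0 ≤ ∑ i ∈ Icc 1 N, p i k :=
          Finset.sum_nonneg (fun i hi => hp0 i hi k hk)
        rw [← mul_assoc]
        have hNk : (1:ℝ) ≤ (N:ℝ) * (1 / (k:ℝ)) := by
          rw [mul_one_div, le_div_iff₀ hkR, one_mul]
          exact_mod_cast hkN
        nlinarith
      calc ∑ k ∈ Icc 1 N, ∑ i ∈ Icc 1 N, p i k
          ≤ ∑ k ∈ Icc 1 N, (N : ℝ) * ((1 / (k : ℝ)) * ∑ i ∈ Icc 1 N, p i k) :=
            Finset.sum_le_sum e
        _ = (N : ℝ) * ∑ k ∈ Icc 1 N, (1 / (k : ℝ)) * ∑ i ∈ Icc 1 N, p i k := by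
            rw [← Finset.mul_sum]
        _ ≤ (N : ℝ) := by
            have hN0 : (0:ℝ) ≤ N := Nat.cast_nonneg N
            nlinarith [hpC]
    calc ∑ k ∈ Icc 1 N, ∑ i ∈ Icc 1 N, p i k * (F k - r i)
        ≤ ∑ k ∈ Icc 1 N, F 1 * ∑ i ∈ Icc 1 N, p i k := Finset.sum_le_sum step1
      _ = F 1 * ∑ k ∈ Icc 1 N, ∑ i ∈ Icc 1 N, p i k := by rw [← Finset.mul_sum]
      _ ≤ F 1 * N := mul_le_mul_of_nonneg_left step2 hF1
      _ = N * F 1 := mul_comm _ _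
  -- the two sets
  have hAne : (Set.Nonempty {w : ℝ | ∃ φ : ℕ → Finset ℕ → ℝ,
      IsScheme N φ ∧ Persuasive N F r μ1 φ ∧ w = EW N F r μ1 φ}) :=
    ⟨EW N F r μ1 φd, φd, hIsd, hPerd, rfl⟩
  have hBbdd : BddAbove {v : ℝ | ∃ p : ℕ → ℕ → ℝ,
      (∀ i ∈ Icc 1 N, ∀ k ∈ Icc 1 N, 0 ≤ p i k) ∧
      (∀ i ∈ Icc 1 N, 0 ≤ ∑ k ∈ Icc 1 N, p i k * (F k - r i)) ∧
      (∀ i ∈ Icc 1 N,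
        ∑ k ∈ Icc 1 (N - 1),
            ((1 / (k : ℝ)) * (∑ j ∈ Icc 1 N, p j k) - p i k) * (F (k + 1) - r i) +
          (1 - ∑ k ∈ Icc 1 N, (1 / (k : ℝ)) * ∑ j ∈ Icc 1 N, p j k) * (F 1 - r i)
          ≤ ((1 - μ1) / μ1) * r i) ∧
      (∑ k ∈ Icc 1 N, (1 / (k : ℝ)) * ∑ i ∈ Icc 1 N, p i k ≤ 1) ∧
      (∀ i ∈ Icc 1 N, ∀ k ∈ Icc 1 N, (k : ℝ) * p i k ≤ ∑ j ∈ Icc 1 N, p j k) ∧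
      v = ∑ k ∈ Icc 1 N, ∑ i ∈ Icc 1 N, p i k * (F k - r i)} := by
    refine ⟨N * F 1, ?_⟩
    rintro v ⟨p, c1, c2, c3, c4, c5, rfl⟩
    exact hBub p c1 c4
  obtain ⟨d1, d2, d3, d4, d5, hled⟩ := dirLE N hN F r hrnn μ1 hμ0 hμ1 φd hIsd hPerd
  have hBne : (Set.Nonempty {v : ℝ | ∃ p : ℕ → ℕ → ℝ,
      (∀ i ∈ Icc 1 N, ∀ k ∈ Icc 1 N, 0 ≤ p i k) ∧
      (∀ i ∈ Icc 1 N, 0 ≤ ∑ k ∈ Icc 1 N, p i k * (F k - r i)) ∧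
      (∀ i ∈ Icc 1 N,
        ∑ k ∈ Icc 1 (N - 1),
            ((1 / (k : ℝ)) * (∑ j ∈ Icc 1 N, p j k) - p i k) * (F (k + 1) - r i) +
          (1 - ∑ k ∈ Icc 1 N, (1 / (k : ℝ)) * ∑ j ∈ Icc 1 N, p j k) * (F 1 - r i)
          ≤ ((1 - μ1) / μ1) * r i) ∧
      (∑ k ∈ Icc 1 N, (1 / (k : ℝ)) * ∑ i ∈ Icc 1 N, p i k ≤ 1) ∧
      (∀ i ∈ Icc 1 N, ∀ k ∈ Icc 1 N, (k : ℝ) * p i k ≤ ∑ j ∈ Icc 1 N, p j k) ∧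
      v = ∑ k ∈ Icc 1 N, ∑ i ∈ Icc 1 N, p i k * (F k - r i)}) :=
    ⟨_, pOf N φd, d1, d2, d3, d4, d5, rfl⟩
  have hAbdd : BddAbove {w : ℝ | ∃ φ : ℕ → Finset ℕ → ℝ,
      IsScheme N φ ∧ Persuasive N F r μ1 φ ∧ w = EW N F r μ1 φ} := by
    refine ⟨μ1 * (N * F 1), ?_⟩
    rintro w ⟨φ, hIs, hPer, rfl⟩
    obtain ⟨c1, c2, c3, c4, c5, hle⟩ := dirLE N hN F r hrnn μ1 hμ0 hμ1 φ hIs hPer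
    exact le_trans hle (mul_le_mul_of_nonneg_left (hBub _ c1 c4) hμ0.le)
  apply le_antisymm
  · apply csSup_le hAne
    rintro w ⟨φ, hIs, hPer, rfl⟩
    obtain ⟨c1, c2, c3, c4, c5, hle⟩ := dirLE N hN F r hrnn μ1 hμ0 hμ1 φ hIs hPer
    refine le_trans hle (mul_le_mul_of_nonneg_left ?_ hμ0.le)
    exact le_csSup hBbdd ⟨pOf N φ, c1, c2, c3, c4, c5, rfl⟩
  · have h2 : sSup {v : ℝ | ∃ p : ℕ → ℕ → ℝ,
        (∀ i ∈ Icc 1 N, ∀ k ∈ Icc 1 N, 0 ≤ p i k) ∧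
        (∀ i ∈ Icc 1 N, 0 ≤ ∑ k ∈ Icc 1 N, p i k * (F k - r i)) ∧
        (∀ i ∈ Icc 1 N,
          ∑ k ∈ Icc 1 (N - 1),
              ((1 / (k : ℝ)) * (∑ j ∈ Icc 1 N, p j k) - p i k) * (F (k + 1) - r i) +
            (1 - ∑ k ∈ Icc 1 N, (1 / (k : ℝ)) * ∑ j ∈ Icc 1 N, p j k) * (F 1 - r i)
            ≤ ((1 - μ1) / μ1) * r i) ∧
        (∑ k ∈ Icc 1 N, (1 / (k : ℝ)) * ∑ i ∈ Icc 1 N, p i k ≤ 1) ∧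
        (∀ i ∈ Icc 1 N, ∀ k ∈ Icc 1 N, (k : ℝ) * p i k ≤ ∑ j ∈ Icc 1 N, p j k) ∧
        v = ∑ k ∈ Icc 1 N, ∑ i ∈ Icc 1 N, p i k * (F k - r i)}
        ≤ sSup {w : ℝ | ∃ φ : ℕ → Finset ℕ → ℝ,
            IsScheme N φ ∧ Persuasive N F r μ1 φ ∧ w = EW N F r μ1 φ} / μ1 := by
      apply csSup_le hBne
      rintro v ⟨p, c1, c2, c3, c4, c5, rfl⟩
      obtain ⟨φ, hIs, hPer, hEW⟩ := dirGE N hN F r μ1 hμ0 hμ1 p c1 c2 c3 c4 c5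
      rw [le_div_iff₀ hμ0]
      have hmem := le_csSup hAbdd ⟨φ, hIs, hPer, hEW.symm⟩
      linarith [hmem]
    calc μ1 * sSup _ ≤ μ1 * (sSup {w : ℝ | ∃ φ : ℕ → Finset ℕ → ℝ,
            IsScheme N φ ∧ Persuasive N F r μ1 φ ∧ w = EW N F r μ1 φ} / μ1) :=
          mul_le_mul_of_nonneg_left h2 hμ0.le
      _ = _ := by field_simp

end
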